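/- Let T : X → X be a map, f : X → [0,∞) a function, x ∈ X a point, and set S_r = {y ∈ X : f(y) ≤ r} and τ(x, S_r) = min{n ∈ ℕ⁺ : Tⁿ(x) ∈ S_r}. Suppose that lim_{r→0} log τ(x, S_r) / (−log r) = d for some d ∈ (0, ∞), and that f(Tⁱ(x)) > 0 for every i ≥ 1. Define d_n(x) = min_{1 ≤ i ≤ n} f(Tⁱ(x)). Then limsup_{n→∞} (−log d_n(x)) / log n = 1/d. -/
import Mathlib
open Filter MeasureTheory Set Topology ENNReal

noncomputable def hitTime {X : Type*} (T : X → X) (S : Set X) (x : X) : ℕ∞ :=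
  sInf ((fun n : ℕ => (n : ℕ∞)) '' {n : ℕ | 0 < n ∧ T^[n] x ∈ S})

lemma hitTime_le_iff {X : Type*} (T : X → X) (S : Set X) (x : X) (n : ℕ) :
    hitTime T S x ≤ (n : ℕ∞) ↔ ∃ m : ℕ, 0 < m ∧ m ≤ n ∧ T^[m] x ∈ S := by
  constructor
  · intro h
    by_contra hc
    push_neg at hc
    have h2 : ((n + 1 : ℕ) : ℕ∞) ≤ hitTime T S x := by
      apply le_sInf
      rintro b ⟨m, ⟨hm0, hmS⟩, rfl⟩
      have hnm : n < m := by
        by_contra h'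
        push_neg at h'
        exact hc m hm0 h' hmS
      show ((n + 1 : ℕ) : ℕ∞) ≤ (m : ℕ∞)
      exact_mod_cast hnm
    have h3 : ((n + 1 : ℕ) : ℕ∞) ≤ (n : ℕ∞) := h2.trans h
    have : n + 1 ≤ n := by exact_mod_cast h3
    omega
  · rintro ⟨m, hm0, hmn, hmS⟩
    refine le_trans (sInf_le ⟨m, ⟨hm0, hmS⟩, rfl⟩) ?_
    show (m : ℕ∞) ≤ (n : ℕ∞)
    exact_mod_cast hmn

lemma one_le_hitTime {X : Type*} (T : X → X) (S : Set X) (x : X) :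
    (1 : ℕ∞) ≤ hitTime T S x := by
  apply le_sInf
  rintro b ⟨m, ⟨hm0, _⟩, rfl⟩
  show (1 : ℕ∞) ≤ (m : ℕ∞)
  exact_mod_cast hm0

lemma key_extract {X : Type*} (T : X → X) (f : X → ℝ) (x : X) (d : ℝ)
    (hlim : Tendsto (fun r : ℝ =>
        ENNReal.log ((hitTime T {y | f y ≤ r} x : ℝ≥0∞)) / ((- Real.log r : ℝ) : EReal))
      (𝓝[>] 0) (𝓝 (d : EReal))) {ε : ℝ} (hε : 0 < ε) :
    ∀ᶠ r in 𝓝[>] (0:ℝ), ∃ N : ℕ, 1 ≤ N ∧ hitTime T {y | f y ≤ r} x = (N : ℕ∞) ∧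
      (d - ε) * (-Real.log r) < Real.log N ∧ Real.log N < (d + ε) * (-Real.log r) := by
  have hmem : Ioo ((d - ε : ℝ) : EReal) ((d + ε : ℝ) : EReal) ∈ 𝓝 (d : EReal) := by
    apply Ioo_mem_nhds
    · exact_mod_cast (by linarith : d - ε < d)
    · exact_mod_cast (by linarith : d < d + ε)
  have h1 : ∀ᶠ r in 𝓝[>] (0:ℝ), ENNReal.log ((hitTime T {y | f y ≤ r} x : ℝ≥0∞)) / ((- Real.log r : ℝ) : EReal) ∈ Ioo ((d - ε : ℝ) : EReal) ((d + ε : ℝ) : EReal) := hlim.eventually_mem hmem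
  have h2 : ∀ᶠ r in 𝓝[>] (0:ℝ), r ∈ Ioo (0:ℝ) 1 :=
    Ioo_mem_nhdsGT_of_mem ⟨le_refl 0, one_pos⟩
  filter_upwards [h1, h2] with r hq hr
  simp only [Set.mem_Ioo] at hq
  have hL : 0 < -Real.log r := by nlinarith [Real.log_neg hr.1 hr.2]
  set τ := hitTime T {y | f y ≤ r} x with hτ
  have hfin : τ ≠ ⊤ := by
    intro htop
    have h3 := hq.2
    rw [htop] at h3
    have he : ENNReal.log (((⊤ : ℕ∞) : ℝ≥0∞)) = ⊤ := by simp
    rw [he, EReal.top_div_of_pos_ne_top (by exact_mod_cast hL) (EReal.coe_ne_top _)] at h3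
    exact not_top_lt h3
  set N := τ.toNat with hN
  have hNτ : τ = (N : ℕ∞) := (ENat.coe_toNat hfin).symm
  have hN1 : 1 ≤ N := by
    have := one_le_hitTime T {y | f y ≤ r} x
    rw [← hτ, hNτ] at this
    exact_mod_cast this
  refine ⟨N, hN1, hNτ, ?_⟩
  · have hcast : ((τ : ℝ≥0∞)) = (N : ℝ≥0∞) := by rw [hNτ]; simp
    rw [hcast] at hq
    have hlog : ENNReal.log ((N : ℝ≥0∞)) = (Real.log N : EReal) := by
      rw [ENNReal.log_pos_real' (by rw [ENNReal.toReal_natCast]; exact_mod_cast Nat.lt_of_lt_of_le Nat.zero_lt_one hN1), ENNReal.toReal_natCast]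
    rw [hlog, ← EReal.coe_div] at hq
    have hq1 : d - ε < Real.log N / (-Real.log r) := by exact_mod_cast hq.1
    have hq2 : Real.log N / (-Real.log r) < d + ε := by exact_mod_cast hq.2
    constructor
    · exact (lt_div_iff₀ hL).mp hq1
    · exact (div_lt_iff₀ hL).mp hq2

/-- Pointwise translation between the hitting-time exponent and the rate of approach of the
orbit: if `lim_{r→0} log τ(x,S_r)/(-log r) = d ∈ (0,∞)` for the sublevel sets
`S_r = {y : f y ≤ r}` of `f : X → [0,∞)`, and `f(Tⁱ x) > 0` for all `i ≥ 1`, then with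
`d_n(x) = min_{1 ≤ i ≤ n} f(Tⁱ x)` one has `limsup_{n→∞} (-log d_n(x))/log n = 1/d`. -/
theorem hitting_exponent_to_approach_rate
    {X : Type*} (T : X → X) (f : X → ℝ) (hf0 : ∀ x, 0 ≤ f x) (x : X)
    (d : ℝ) (hd : 0 < d)
    (hlim : Tendsto (fun r : ℝ =>
        ENNReal.log ((hitTime T {y | f y ≤ r} x : ℝ≥0∞)) / ((- Real.log r : ℝ) : EReal))
      (𝓝[>] 0) (𝓝 (d : EReal)))
    (hpos : ∀ i : ℕ, 1 ≤ i → 0 < f (T^[i] x)) :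
    limsup (fun n : ℕ =>
        (- Real.log (sInf ((fun i : ℕ => f (T^[i] x)) '' Set.Icc 1 n))) / Real.log n)
      atTop = 1 / d := by
  set g : ℕ → ℝ := fun i => f (T^[i] x) with hg
  set D : ℕ → ℝ := fun n => sInf (g '' Set.Icc 1 n) with hD
  set u : ℕ → ℝ := fun n => (- Real.log (D n)) / Real.log n with hu
  change limsup u atTop = 1 / d
  have hDmem : ∀ n : ℕ, 1 ≤ n → D n ∈ g '' Set.Icc 1 n := by
    intro n hn
    exact Set.Nonempty.csInf_mem ⟨g 1, ⟨1, ⟨le_refl 1, hn⟩, rfl⟩⟩ ((Set.finite_Icc 1 n).image g)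
  have hDpos : ∀ n : ℕ, 1 ≤ n → 0 < D n := by
    intro n hn
    obtain ⟨i, hi, hgi⟩ := hDmem n hn
    rw [← hgi]
    exact hpos i hi.1
  have hDle_iff : ∀ n : ℕ, 1 ≤ n → ∀ r : ℝ, (D n ≤ r ↔ ∃ i, 1 ≤ i ∧ i ≤ n ∧ g i ≤ r) := by
    intro n hn r
    constructor
    · intro h
      obtain ⟨i, hi, hgi⟩ := hDmem n hn
      exact ⟨i, hi.1, hi.2, by rw [hgi]; exact h⟩
    · rintro ⟨i, hi1, hin, hgi⟩
      refine le_trans (csInf_le ⟨0, ?_⟩ ⟨i, ⟨hi1, hin⟩, rfl⟩) hgi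
      rintro y ⟨j, _, rfl⟩
      exact hf0 _
  have hkey : ∀ n : ℕ, 1 ≤ n → ∀ r : ℝ,
      (hitTime T {y | f y ≤ r} x ≤ (n : ℕ∞) ↔ D n ≤ r) := by
    intro n hn r
    rw [hitTime_le_iff, hDle_iff n hn r]
    constructor
    · rintro ⟨m, hm0, hmn, hmS⟩; exact ⟨m, hm0, hmn, hmS⟩
    · rintro ⟨i, hi1, hin, hgi⟩; exact ⟨i, hi1, hin, hgi⟩
  -- lower eventual bound
  have lower : ∀ ε : ℝ, 0 < ε → ∀ᶠ n : ℕ in atTop, 1/(d+ε) ≤ u n := by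
    intro ε hε
    have hde : 0 < d + ε := by linarith
    have hkey2 := key_extract T f x d hlim hε
    rw [eventually_iff, mem_nhdsGT_iff_exists_Ioo_subset] at hkey2
    obtain ⟨r0, hr0, hr0P⟩ := hkey2
    have hrn : Tendsto (fun n : ℕ => (n:ℝ) ^ (-(1/(d+ε)))) atTop (𝓝 0) :=
      (tendsto_rpow_neg_atTop (by positivity)).comp tendsto_natCast_atTop_atTop
    filter_upwards [hrn.eventually_lt_const hr0, eventually_ge_atTop 2] with n hn3 hn2
    have hn0 : (0:ℝ) < n := by exact_mod_cast Nat.lt_of_lt_of_le (by omega) hn2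
    have hn1 : (1:ℝ) < n := by exact_mod_cast Nat.lt_of_lt_of_le (by omega) hn2
    set r := (n:ℝ) ^ (-(1/(d+ε))) with hr
    have hrpos : 0 < r := Real.rpow_pos_of_pos hn0 _
    obtain ⟨N, hN1, hNeq, hlow, hhigh⟩ := hr0P ⟨hrpos, hn3⟩
    have hlogr : Real.log r = (-(1/(d+ε))) * Real.log n := Real.log_rpow hn0 _
    have hlogn : 0 < Real.log n := Real.log_pos hn1
    have hN_lt : (N:ℝ) < (n:ℝ) := by
      rw [← Real.log_lt_log_iff (by exact_mod_cast hN1 : (0:ℝ) < (N:ℝ)) hn0]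
      calc Real.log N < (d+ε) * (-Real.log r) := hhigh
        _ = Real.log n := by rw [hlogr]; field_simp
    have hNn : N ≤ n := by exact_mod_cast hN_lt.le
    have hDnr : D n ≤ r := by
      rw [← hkey n (by omega) r, hNeq]
      exact_mod_cast hNn
    have hlogD : Real.log (D n) ≤ Real.log r :=
      (Real.log_le_log_iff (hDpos n (by omega)) hrpos).mpr hDnr
    show 1/(d+ε) ≤ (- Real.log (D n)) / Real.log n
    rw [le_div_iff₀ hlogn]
    rw [hlogr] at hlogD
    nlinarith
  -- upper eventual bound
  have upper : ∀ ε : ℝ, 0 < ε → ε < d → ∀ᶠ n : ℕ in atTop, u n ≤ 1/(d-ε) := by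
    intro ε hε hεd
    have hde : 0 < d - ε := by linarith
    have hkey2 := key_extract T f x d hlim hε
    rw [eventually_iff, mem_nhdsGT_iff_exists_Ioo_subset] at hkey2
    obtain ⟨r0, hr0, hr0P⟩ := hkey2
    have hrn : Tendsto (fun n : ℕ => (n:ℝ) ^ (-(1/(d-ε)))) atTop (𝓝 0) :=
      (tendsto_rpow_neg_atTop (by positivity)).comp tendsto_natCast_atTop_atTop
    filter_upwards [hrn.eventually_lt_const hr0, eventually_ge_atTop 2] with n hn3 hn2
    have hn0 : (0:ℝ) < n := by exact_mod_cast Nat.lt_of_lt_of_le (by omega) hn2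
    have hn1 : (1:ℝ) < n := by exact_mod_cast Nat.lt_of_lt_of_le (by omega) hn2
    set r := (n:ℝ) ^ (-(1/(d-ε))) with hr
    have hrpos : 0 < r := Real.rpow_pos_of_pos hn0 _
    obtain ⟨N, hN1, hNeq, hlow, hhigh⟩ := hr0P ⟨hrpos, hn3⟩
    have hlogr : Real.log r = (-(1/(d-ε))) * Real.log n := Real.log_rpow hn0 _
    have hlogn : 0 < Real.log n := Real.log_pos hn1
    have hn_lt : (n:ℝ) < (N:ℝ) := by
      rw [← Real.log_lt_log_iff hn0 (by exact_mod_cast hN1 : (0:ℝ) < (N:ℝ))]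
      calc Real.log n = (d-ε) * (-Real.log r) := by rw [hlogr]; field_simp
        _ < Real.log N := hlow
    have hnN : n < N := by exact_mod_cast hn_lt
    have hDnr : ¬ (D n ≤ r) := by
      rw [← hkey n (by omega) r, hNeq]
      intro hle
      have : N ≤ n := by exact_mod_cast hle
      omega
    push_neg at hDnr
    have hlogD : Real.log r < Real.log (D n) := Real.log_lt_log hrpos hDnr
    show (- Real.log (D n)) / Real.log n ≤ 1/(d-ε)
    rw [div_le_iff₀ hlogn]
    rw [hlogr] at hlogD
    nlinarith
  -- conclusion
  have hbdd : IsBoundedUnder (· ≤ ·) atTop u :=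
    isBoundedUnder_of_eventually_le (upper (d/2) (by positivity) (by linarith))
  have hcobdd : IsCoboundedUnder (· ≤ ·) atTop u :=
    isCoboundedUnder_le_of_eventually_le atTop (lower 1 one_pos)
  apply le_antisymm
  · apply _root_.le_of_forall_pos_le_add
    intro ε hε
    set ε' : ℝ := d - d/(1+d*ε) with hε'
    have h1de : (0:ℝ) < 1 + d*ε := by nlinarith
    have hε'pos : 0 < ε' := by
      rw [hε']
      have : d/(1+d*ε) < d := by
        rw [div_lt_iff₀ h1de]; nlinarith [mul_pos (mul_pos hd hd) hε]
      linarith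
    have hε'lt : ε' < d := by
      rw [hε']
      have : 0 < d/(1+d*ε) := by positivity
      linarith
    have hls := limsup_le_of_le hcobdd (upper ε' hε'pos hε'lt)
    have heq : 1/(d-ε') = 1/d + ε := by
      rw [hε']
      have hne : d ≠ 0 := ne_of_gt hd
      field_simp
      ring
    rw [heq] at hls
    exact hls
  · apply _root_.le_of_forall_pos_le_add
    intro ε hε
    set ε' : ℝ := ε * d^2 with hε'
    have hε'pos : 0 < ε' := by positivity
    have hls := le_limsup_of_frequently_le ((lower ε' hε'pos).frequently) hbdd
    have heq : 1/d - 1/(d+ε') ≤ ε := by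
      have hdd : 0 < d + ε' := by linarith
      have e1 : 1/d - 1/(d+ε') = ε/(1+ε*d) := by
        rw [hε']
        have hne : d ≠ 0 := ne_of_gt hd
        have h1de : (0:ℝ) < 1 + ε*d := by nlinarith
        field_simp
        ring
      rw [e1]
      have h1de : (1:ℝ) ≤ 1 + ε*d := by nlinarith
      exact div_le_self hε.le h1de
    linarith
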